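/- Let f : ℝ^{m×n} → ℝ be differentiable with β-Lipschitz gradient (β-smooth). Fix a matrix Q ∈ ℝ^{m×r} with orthonormal columns (QᵀQ = I_r), and at step t let Ĝ^(t) = Qᵀ∇f(W^(t)) ∈ ℝ^{r×n} be the projected gradient, let M^(t) ∈ ℝ^{r×n}, and let O^(t) ∈ ℝ^{r×n} satisfy ‖O^(t)‖_F² ≤ n. Update W^(t+1) = W^(t) − η_t Q O^(t) with η_t > 0. Assume (i) the alignment inequality −⟨Ĝ^(t), O^(t)⟩_F ≤ −¼‖Ĝ^(t)‖_F² + (5/2)‖Ĝ^(t) − M^(t)‖_F, and (ii) ‖Ĝ^(t) − M^(t)‖_F ≤ σ/√m. Then f(W^(t+1)) ≤ f(W^(t)) − (η_t/4)‖Ĝ^(t)‖_F² + (5/2)·(η_t σ/√m) + βη_t²n/2. -/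

import Mathlib

open Matrix Finset

/-- Frobenius inner product `⟨A,B⟩_F = tr(AᵀB)`. -/
noncomputable def frobInner {n m : ℕ} (A B : Matrix (Fin n) (Fin m) ℝ) : ℝ :=
  (Aᵀ * B).trace

/-- Frobenius norm. -/
noncomputable def frobNorm {n m : ℕ} (A : Matrix (Fin n) (Fin m) ℝ) : ℝ :=
  Real.sqrt (frobInner A A)

lemma frobInner_eq_sum {n m : ℕ} (A B : Matrix (Fin n) (Fin m) ℝ) :
    frobInner A B = ∑ p : Fin n × Fin m, A p.1 p.2 * B p.1 p.2 := by
  rw [frobInner, Matrix.trace, Fintype.sum_prod_type]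
  simp only [Matrix.diag, Matrix.mul_apply, Matrix.transpose_apply]
  exact Finset.sum_comm

lemma frobInner_self_nonneg {n m : ℕ} (A : Matrix (Fin n) (Fin m) ℝ) :
    0 ≤ frobInner A A := by
  rw [frobInner_eq_sum]
  exact Finset.sum_nonneg fun p _ => mul_self_nonneg _

lemma frobNorm_nonneg {n m : ℕ} (A : Matrix (Fin n) (Fin m) ℝ) : 0 ≤ frobNorm A :=
  Real.sqrt_nonneg _

lemma frobNorm_sq {n m : ℕ} (A : Matrix (Fin n) (Fin m) ℝ) :
    frobNorm A ^ 2 = frobInner A A :=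
  Real.sq_sqrt (frobInner_self_nonneg A)

lemma frobInner_le {n m : ℕ} (A B : Matrix (Fin n) (Fin m) ℝ) :
    frobInner A B ≤ frobNorm A * frobNorm B := by
  have h := Finset.sum_mul_sq_le_sq_mul_sq Finset.univ
    (fun p : Fin n × Fin m => A p.1 p.2) (fun p => B p.1 p.2)
  calc frobInner A B ≤ |frobInner A B| := le_abs_self _
    _ = Real.sqrt ((frobInner A B) ^ 2) := (Real.sqrt_sq_eq_abs _).symm
    _ ≤ Real.sqrt (frobInner A A * frobInner B B) := by
        apply Real.sqrt_le_sqrt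
        rw [frobInner_eq_sum, frobInner_eq_sum, frobInner_eq_sum]
        simpa [pow_two, mul_pow] using h
    _ = frobNorm A * frobNorm B := Real.sqrt_mul (frobInner_self_nonneg A) _

lemma frobInner_smul_right {n m : ℕ} (s : ℝ) (A B : Matrix (Fin n) (Fin m) ℝ) :
    frobInner A (s • B) = s * frobInner A B := by
  simp [frobInner_eq_sum, Finset.mul_sum, mul_left_comm]

lemma frobInner_sub_left {n m : ℕ} (A B C : Matrix (Fin n) (Fin m) ℝ) :
    frobInner (A - B) C = frobInner A C - frobInner B C := by
  simp [frobInner_eq_sum, sub_mul, Finset.sum_sub_distrib]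

lemma frobNorm_smul {n m : ℕ} (s : ℝ) (A : Matrix (Fin n) (Fin m) ℝ) :
    frobNorm (s • A) = |s| * frobNorm A := by
  unfold frobNorm
  rw [show frobInner (s • A) (s • A) = s ^ 2 * frobInner A A by
    rw [frobInner_eq_sum, frobInner_eq_sum, Finset.mul_sum]
    exact Finset.sum_congr rfl fun p _ => by simp [Matrix.smul_apply]; ring]
  rw [Real.sqrt_mul (sq_nonneg s), Real.sqrt_sq_eq_abs]

lemma descent_lemma {m n : ℕ}
    (f : Matrix (Fin m) (Fin n) ℝ → ℝ)
    (gradf : Matrix (Fin m) (Fin n) ℝ → Matrix (Fin m) (Fin n) ℝ)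
    (hgrad : ∀ W V : Matrix (Fin m) (Fin n) ℝ,
      HasDerivAt (fun s : ℝ => f (W + s • V)) (frobInner (gradf W) V) 0)
    (β : ℝ) (hβ : 0 ≤ β)
    (hsmooth : ∀ X Y : Matrix (Fin m) (Fin n) ℝ,
      frobNorm (gradf X - gradf Y) ≤ β * frobNorm (X - Y))
    (W V : Matrix (Fin m) (Fin n) ℝ) :
    f (W + V) ≤ f W + frobInner (gradf W) V + β / 2 * frobNorm V ^ 2 := by
  set g : ℝ → ℝ := fun s => f (W + s • V) with hgdef
  have hg : ∀ s : ℝ, HasDerivAt g (frobInner (gradf (W + s • V)) V) s := by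
    intro s
    have H := hgrad (W + s • V) V
    have H2 : HasDerivAt (fun u : ℝ => g (s + u)) (frobInner (gradf (W + s • V)) V) 0 := by
      convert H using 2 with u
      simp [hgdef, add_smul, add_assoc]
    have H2' : HasDerivAt (fun u : ℝ => g (s + u)) (frobInner (gradf (W + s • V)) V)
        (-s + s) := by rw [neg_add_cancel]; exact H2
    have H3 := HasDerivAt.comp_const_add (-s) s H2'
    simpa using H3
  -- the auxiliary function
  set c : ℝ := frobInner (gradf W) V with hc
  set b : ℝ := β * frobNorm V ^ 2 with hb
  set h : ℝ → ℝ := fun s => g s - s * c - b * s ^ 2 / 2 with hhdef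
  have hh : ∀ s : ℝ, HasDerivAt h (frobInner (gradf (W + s • V)) V - c - b * s) s := by
    intro s
    have := ((hg s).sub ((hasDerivAt_id s).mul_const c)).sub
      (((hasDerivAt_id s).pow 2).const_mul b |>.div_const 2)
    refine this.congr_deriv ?_
    simp only [id_eq]
    ring
  have hderiv_nonpos : ∀ s ∈ Set.Ioo (0:ℝ) 1,
      frobInner (gradf (W + s • V)) V - c - b * s ≤ 0 := by
    intro s hs
    have h1 : frobInner (gradf (W + s • V)) V - c
        = frobInner (gradf (W + s • V) - gradf W) V := by
      rw [frobInner_sub_left]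
    have h2 : frobInner (gradf (W + s • V) - gradf W) V
        ≤ frobNorm (gradf (W + s • V) - gradf W) * frobNorm V := frobInner_le _ _
    have h3 : frobNorm (gradf (W + s • V) - gradf W) ≤ β * frobNorm (s • V) := by
      have := hsmooth (W + s • V) W
      simpa using this
    have h4 : frobNorm (s • V) = s * frobNorm V := by
      rw [frobNorm_smul, abs_of_pos hs.1]
    have h5 := mul_le_mul_of_nonneg_right h3 (frobNorm_nonneg V)
    rw [h4] at h5
    rw [hb]
    nlinarith [h1, h2, h5]
  have hanti : AntitoneOn h (Set.Icc 0 1) := by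
    apply antitoneOn_of_deriv_nonpos (convex_Icc 0 1)
    · exact Continuous.continuousOn (by
        have : Differentiable ℝ h := fun s => (hh s).differentiableAt
        exact this.continuous)
    · intro s hs
      exact (hh s).differentiableAt.differentiableWithinAt
    · intro s hs
      rw [interior_Icc] at hs
      rw [(hh s).deriv]
      exact hderiv_nonpos s hs
  have := hanti (Set.left_mem_Icc.2 zero_le_one) (Set.right_mem_Icc.2 zero_le_one) zero_le_one
  simp only [hhdef, hgdef] at this
  simp only [one_smul, zero_smul, add_zero] at this
  rw [hb, hc] at this
  nlinarith [this]

lemma frobInner_adjoint {m n r : ℕ} (G : Matrix (Fin m) (Fin n) ℝ)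
    (Q : Matrix (Fin m) (Fin r) ℝ) (O : Matrix (Fin r) (Fin n) ℝ) :
    frobInner G (Q * O) = frobInner (Qᵀ * G) O := by
  unfold frobInner
  rw [Matrix.transpose_mul, Matrix.transpose_transpose, Matrix.mul_assoc]

lemma frobNorm_mul_orth {m n r : ℕ} (Q : Matrix (Fin m) (Fin r) ℝ) (hQ : Qᵀ * Q = 1)
    (O : Matrix (Fin r) (Fin n) ℝ) :
    frobNorm (Q * O) = frobNorm O := by
  unfold frobNorm frobInner
  rw [Matrix.transpose_mul, Matrix.mul_assoc, ← Matrix.mul_assoc Qᵀ Q O, hQ, Matrix.one_mul]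

/-- **One-step descent of SUMO's inner fixed low-rank optimization.**
`f` is β-smooth with gradient `gradf`; `Q` has orthonormal columns; `Ĝ = Qᵀ∇f(W)` is the
projected gradient, `O` the orthogonalized low-rank momentum with `‖O‖_F² ≤ n`; with the
alignment inequality and `‖Ĝ − M‖_F ≤ σ/√m`, the update `W' = W − ηQO` satisfies
`f(W') ≤ f(W) − (η/4)‖Ĝ‖² + (5/2)(ησ/√m) + βη²n/2`. -/
theorem sumo_inner_descent_step
    {m n r : ℕ}
    (f : Matrix (Fin m) (Fin n) ℝ → ℝ)
    (gradf : Matrix (Fin m) (Fin n) ℝ → Matrix (Fin m) (Fin n) ℝ)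
    (hgrad : ∀ W V : Matrix (Fin m) (Fin n) ℝ,
      HasDerivAt (fun s : ℝ => f (W + s • V)) (frobInner (gradf W) V) 0)
    (β : ℝ) (hβ : 0 ≤ β)
    (hsmooth : ∀ X Y : Matrix (Fin m) (Fin n) ℝ,
      frobNorm (gradf X - gradf Y) ≤ β * frobNorm (X - Y))
    (Q : Matrix (Fin m) (Fin r) ℝ) (hQ : Qᵀ * Q = 1)
    (Wt W' : Matrix (Fin m) (Fin n) ℝ)
    (Ghat Mt Ot : Matrix (Fin r) (Fin n) ℝ)
    (hGhat : Ghat = Qᵀ * gradf Wt)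
    (hO : frobNorm Ot ^ 2 ≤ n)
    (η σ : ℝ) (hη : 0 < η) (hσ : 0 ≤ σ)
    (hW' : W' = Wt - η • (Q * Ot))
    (halign : -(frobInner Ghat Ot) ≤
      -(1 / 4) * frobNorm Ghat ^ 2 + (5 / 2) * frobNorm (Ghat - Mt))
    (hnoise : frobNorm (Ghat - Mt) ≤ σ / Real.sqrt m) :
    f W' ≤ f Wt - (η / 4) * frobNorm Ghat ^ 2
      + (5 / 2) * (η * σ / Real.sqrt m) + β * η ^ 2 * n / 2 := by
  have hW'' : W' = Wt + (-η) • (Q * Ot) := by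
    rw [hW', neg_smul, sub_eq_add_neg]
  have hd := descent_lemma f gradf hgrad β hβ hsmooth Wt ((-η) • (Q * Ot))
  rw [← hW''] at hd
  have e1 : frobInner (gradf Wt) ((-η) • (Q * Ot)) = -η * frobInner Ghat Ot := by
    rw [frobInner_smul_right, frobInner_adjoint, ← hGhat]
  have e2 : frobNorm ((-η) • (Q * Ot)) ^ 2 = η ^ 2 * frobNorm Ot ^ 2 := by
    rw [frobNorm_smul, frobNorm_mul_orth Q hQ, mul_pow, abs_neg, abs_of_pos hη]
  rw [e1, e2] at hd
  have ha := mul_le_mul_of_nonneg_left halign hη.le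
  have hn := mul_le_mul_of_nonneg_left hnoise (by positivity : (0:ℝ) ≤ (5/2) * η)
  have hOn := mul_le_mul_of_nonneg_left hO (by positivity : (0:ℝ) ≤ β * η ^ 2 / 2)
  have r1 : η * -frobInner Ghat Ot = -η * frobInner Ghat Ot := by ring
  have r2 : η * (-(1 / 4) * frobNorm Ghat ^ 2 + 5 / 2 * frobNorm (Ghat - Mt))
      = -(η / 4) * frobNorm Ghat ^ 2 + 5 / 2 * η * frobNorm (Ghat - Mt) := by ring
  have r3 : 5 / 2 * η * (σ / Real.sqrt m) = 5 / 2 * (η * σ / Real.sqrt m) := by ring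
  have r4 : β * η ^ 2 / 2 * frobNorm Ot ^ 2 = β / 2 * (η ^ 2 * frobNorm Ot ^ 2) := by ring
  have r5 : β * η ^ 2 / 2 * (n : ℝ) = β * η ^ 2 * n / 2 := by ring
  have r6 : -(η / 4) * frobNorm Ghat ^ 2 = -(η / 4 * frobNorm Ghat ^ 2) := by ring
  linarith [hd, ha, hn, hOn, r1, r2, r3, r4, r5, r6]
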